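/- Let D be a resolvable Steiner 2-((sk−s+1)k, k, 1) design with s, k ≥ 2, and suppose D admits a set S of m mutually compatible resolutions. Then m ≤ (sk−k+1)s. -/

import Mathlib

open Finset

def IsSteinerSystem (v k : ℕ) {X : Type*} [Fintype X] [DecidableEq X]
    (B : Finset (Finset X)) : Prop :=
  Fintype.card X = v ∧ (∀ b ∈ B, b.card = k) ∧
    ∀ p q : X, p ≠ q → ∃! b, b ∈ B ∧ p ∈ b ∧ q ∈ b

/-- A parallel class: a set of pairwise disjoint blocks covering every point. -/
def IsParallelClass {X : Type*} [Fintype X] [DecidableEq X]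
    (B : Finset (Finset X)) (P : Finset (Finset X)) : Prop :=
  P ⊆ B ∧ (∀ b1 ∈ P, ∀ b2 ∈ P, b1 ≠ b2 → Disjoint b1 b2) ∧ ∀ p : X, ∃ b ∈ P, p ∈ b

/-- A resolution: a partition of the block set into parallel classes. -/
def IsResolution {X : Type*} [Fintype X] [DecidableEq X]
    (B : Finset (Finset X)) (R : Finset (Finset (Finset X))) : Prop :=
  (∀ P ∈ R, IsParallelClass B P) ∧ ∀ b ∈ B, ∃! P, P ∈ R ∧ b ∈ P

/-- Two resolutions are compatible if they share exactly one parallel class and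
any two of their other parallel classes share at most one block. -/
def Compatible {X : Type*} [Fintype X] [DecidableEq X]
    (R1 R2 : Finset (Finset (Finset X))) : Prop :=
  ∃ P : Finset (Finset X), R1 ∩ R2 = {P} ∧
    ∀ P' ∈ R1, ∀ Q' ∈ R2, P' ≠ P → Q' ≠ P → (P' ∩ Q').card ≤ 1

section AuxLemmas

variable {X : Type*} [Fintype X] [DecidableEq X]

lemma point_deg (B : Finset (Finset X)) (k : ℕ)
    (hblk : ∀ b ∈ B, b.card = k)
    (hpair : ∀ p q : X, p ≠ q → ∃! b, b ∈ B ∧ p ∈ b ∧ q ∈ b) (p : X) :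
    (B.filter (fun b => p ∈ b)).card * (k - 1) = Fintype.card X - 1 := by
  classical
  have hU : (Finset.univ.erase p) = (B.filter (fun b => p ∈ b)).biUnion (fun b => b.erase p) := by
    ext q
    simp only [mem_erase, mem_univ, and_true, mem_biUnion, mem_filter]
    constructor
    · intro hq
      obtain ⟨b, ⟨hbB, hpb, hqb⟩, _⟩ := hpair p q (Ne.symm hq)
      exact ⟨b, ⟨hbB, hpb⟩, hq, hqb⟩
    · rintro ⟨b, _, hq, _⟩; exact hq
  have hdisj : ∀ b1 ∈ B.filter (fun b => p ∈ b), ∀ b2 ∈ B.filter (fun b => p ∈ b),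
      b1 ≠ b2 → Disjoint (b1.erase p) (b2.erase p) := by
    intro b1 h1 b2 h2 hne
    simp only [mem_filter] at h1 h2
    rw [Finset.disjoint_left]
    intro q hq1 hq2
    have hqp : q ≠ p := (mem_erase.mp hq1).1
    exact hne ((hpair p q (Ne.symm hqp)).unique ⟨h1.1, h1.2, (mem_erase.mp hq1).2⟩
      ⟨h2.1, h2.2, (mem_erase.mp hq2).2⟩)
  have h1 : (Finset.univ.erase p).card = Fintype.card X - 1 := by
    rw [card_erase_of_mem (mem_univ p), Finset.card_univ]
  have hsum : ∑ b ∈ B.filter (fun b => p ∈ b), (b.erase p).card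
      = (B.filter (fun b => p ∈ b)).card * (k - 1) := by
    rw [Finset.sum_congr rfl (fun b hb => ?_), Finset.sum_const, smul_eq_mul]
    simp only [mem_filter] at hb
    rw [card_erase_of_mem hb.2, hblk b hb.1]
  rw [← h1, hU, card_biUnion hdisj, hsum]

lemma block_count (B : Finset (Finset X)) (k : ℕ)
    (hblk : ∀ b ∈ B, b.card = k)
    (hpair : ∀ p q : X, p ≠ q → ∃! b, b ∈ B ∧ p ∈ b ∧ q ∈ b) :
    B.card * (k * k - k) = Fintype.card X * Fintype.card X - Fintype.card X := by
  classical
  have hU : (Finset.univ : Finset X).offDiag = B.biUnion (fun b => b.offDiag) := by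
    ext q
    simp only [mem_offDiag, mem_univ, true_and, mem_biUnion]
    constructor
    · intro hq
      obtain ⟨b, ⟨hbB, h1, h2⟩, _⟩ := hpair q.1 q.2 hq
      exact ⟨b, hbB, h1, h2, hq⟩
    · rintro ⟨b, _, _, _, hq⟩; exact hq
  have hdisj : ∀ b1 ∈ B, ∀ b2 ∈ B, b1 ≠ b2 → Disjoint b1.offDiag b2.offDiag := by
    intro b1 h1 b2 h2 hne
    rw [Finset.disjoint_left]
    intro q hq1 hq2
    rw [mem_offDiag] at hq1 hq2
    exact hne ((hpair q.1 q.2 hq1.2.2).unique ⟨h1, hq1.1, hq1.2.1⟩ ⟨h2, hq2.1, hq2.2.1⟩)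
  have := congrArg Finset.card hU
  rw [offDiag_card, card_biUnion hdisj, Finset.card_univ] at this
  have hsum : ∑ b ∈ B, (b.offDiag).card = B.card * (k * k - k) := by
    rw [Finset.sum_congr rfl (fun b hb => ?_), Finset.sum_const, smul_eq_mul]
    rw [offDiag_card, hblk b hb]
  rw [hsum] at this
  exact this.symm

lemma meet_count (B : Finset (Finset X)) (k r : ℕ)
    (hpair : ∀ p q : X, p ≠ q → ∃! b, b ∈ B ∧ p ∈ b ∧ q ∈ b)
    (hr : ∀ p : X, (B.filter (fun b => p ∈ b)).card = r)
    (c : Finset X) (hc : c ∈ B) (hck : c.card = k) :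
    (B.filter (fun d => d ≠ c ∧ ¬ Disjoint c d)).card = k * (r - 1) := by
  classical
  have hU : B.filter (fun d => d ≠ c ∧ ¬ Disjoint c d)
      = c.biUnion (fun p => (B.filter (fun b => p ∈ b)).erase c) := by
    ext d
    simp only [mem_filter, mem_biUnion, mem_erase]
    constructor
    · rintro ⟨hdB, hdc, hnd⟩
      obtain ⟨p, hpc, hpd⟩ := Finset.not_disjoint_iff.mp hnd
      exact ⟨p, hpc, hdc, hdB, hpd⟩
    · rintro ⟨p, hpc, hdc, hdB, hpd⟩
      exact ⟨hdB, hdc, Finset.not_disjoint_iff.mpr ⟨p, hpc, hpd⟩⟩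
  have hdisj : ∀ p ∈ c, ∀ q ∈ c, p ≠ q →
      Disjoint ((B.filter (fun b => p ∈ b)).erase c) ((B.filter (fun b => q ∈ b)).erase c) := by
    intro p hp q hq hpq
    rw [Finset.disjoint_left]
    intro d hd1 hd2
    rw [mem_erase, mem_filter] at hd1 hd2
    exact hd1.1 ((hpair p q hpq).unique ⟨hd1.2.1, hd1.2.2, hd2.2.2⟩ ⟨hc, hp, hq⟩)
  rw [hU, card_biUnion hdisj]
  have hsum : ∀ p ∈ c, ((B.filter (fun b => p ∈ b)).erase c).card = r - 1 := by
    intro p hp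
    rw [card_erase_of_mem (by simp [mem_filter, hc, hp]), hr p]
  rw [Finset.sum_congr rfl hsum, Finset.sum_const, smul_eq_mul, hck]

lemma class_card {B P : Finset (Finset X)} {n k : ℕ}
    (hblk : ∀ b ∈ B, b.card = k) (hv : Fintype.card X = n * k) (hk : 0 < k)
    (hP : IsParallelClass B P) :
    P.card = n := by
  have hU : (Finset.univ : Finset X) = P.biUnion id := by
    ext p
    simp only [mem_univ, mem_biUnion, id, true_iff]
    exact hP.2.2 p
  have := congrArg Finset.card hU
  rw [Finset.card_univ, hv, card_biUnion (by intro x hx y hy hxy; exact hP.2.1 x hx y hy hxy)] at this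
  simp only [id_eq] at this
  rw [Finset.sum_congr rfl (fun b hb => hblk b (hP.1 hb)), Finset.sum_const, smul_eq_mul] at this
  exact Nat.eq_of_mul_eq_mul_right hk this.symm

lemma res_card {B : Finset (Finset X)} {R : Finset (Finset (Finset X))} {r : ℕ}
    (hr : ∀ p : X, (B.filter (fun b => p ∈ b)).card = r)
    (hR : IsResolution B R) (p0 : X) : R.card = r := by
  have hU : B.filter (fun b => p0 ∈ b) = R.biUnion (fun P => P.filter (fun b => p0 ∈ b)) := by
    ext b
    simp only [mem_filter, mem_biUnion]
    constructor
    · rintro ⟨hbB, hp0⟩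
      obtain ⟨P, ⟨hPR, hbP⟩, -⟩ := hR.2 b hbB
      exact ⟨P, hPR, hbP, hp0⟩
    · rintro ⟨P, hPR, hbP, hp0⟩
      exact ⟨(hR.1 P hPR).1 hbP, hp0⟩
  have hdisj : ∀ P ∈ R, ∀ Q ∈ R, P ≠ Q →
      Disjoint (P.filter (fun b => p0 ∈ b)) (Q.filter (fun b => p0 ∈ b)) := by
    intro P hP Q hQ hne
    rw [Finset.disjoint_left]
    intro b hb1 hb2
    rw [mem_filter] at hb1 hb2
    exact hne ((hR.2 b ((hR.1 P hP).1 hb1.1)).unique ⟨hP, hb1.1⟩ ⟨hQ, hb2.1⟩)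
  have hone : ∀ P ∈ R, (P.filter (fun b => p0 ∈ b)).card = 1 := by
    intro P hP
    obtain ⟨b, hbP, hp0⟩ := (hR.1 P hP).2.2 p0
    rw [Finset.card_eq_one]
    refine ⟨b, ?_⟩
    ext d
    simp only [mem_filter, mem_singleton]
    constructor
    · rintro ⟨hdP, hp0d⟩
      by_contra hne
      exact (Finset.disjoint_left.mp ((hR.1 P hP).2.1 d hdP b hbP hne) hp0d) hp0
    · rintro rfl; exact ⟨hbP, hp0⟩
  have := congrArg Finset.card hU
  rw [hr p0, card_biUnion hdisj, Finset.sum_congr rfl hone, Finset.sum_const, smul_eq_mul,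
    mul_one] at this
  exact this.symm

end AuxLemmas

/-- The set of ordered pairs of distinct blocks lying in a common parallel class. -/
def covPairs {X : Type*} [DecidableEq X] (R : Finset (Finset (Finset X))) :
    Finset (Finset X × Finset X) :=
  R.biUnion (fun P => P.offDiag)

section AuxLemmas2

variable {X : Type*} [Fintype X] [DecidableEq X]

lemma cov_offdiag_disjoint {B : Finset (Finset X)} {R : Finset (Finset (Finset X))}
    (hR : IsResolution B R) :
    ∀ P ∈ R, ∀ Q ∈ R, P ≠ Q → Disjoint P.offDiag Q.offDiag := by
  intro P hP Q hQ hne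
  rw [Finset.disjoint_left]
  intro π hπ1 hπ2
  rw [mem_offDiag] at hπ1 hπ2
  exact hne ((hR.2 π.1 ((hR.1 P hP).1 hπ1.1)).unique ⟨hP, hπ1.1⟩ ⟨hQ, hπ2.1⟩)

lemma cov_card {B : Finset (Finset X)} {R : Finset (Finset (Finset X))} {n : ℕ}
    (hR : IsResolution B R)
    (hclass : ∀ P ∈ R, P.card = n) :
    (covPairs R).card = R.card * (n * n - n) := by
  rw [covPairs, card_biUnion (cov_offdiag_disjoint hR),
    Finset.sum_congr rfl (fun P hP => by rw [offDiag_card, hclass P hP]),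
    Finset.sum_const, smul_eq_mul]

lemma cov_inter {B : Finset (Finset X)} {R R' : Finset (Finset (Finset X))}
    {P0 : Finset (Finset X)}
    (hR : IsResolution B R)
    (hI : R ∩ R' = {P0})
    (hle : ∀ P' ∈ R, ∀ Q' ∈ R', P' ≠ P0 → Q' ≠ P0 → (P' ∩ Q').card ≤ 1) :
    covPairs R ∩ covPairs R' = P0.offDiag := by
  have hP0 : P0 ∈ R ∩ R' := by rw [hI]; exact mem_singleton_self P0
  rw [mem_inter] at hP0
  ext π
  simp only [covPairs, mem_inter, mem_biUnion]
  constructor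
  · rintro ⟨⟨P, hPR, hπP⟩, ⟨Q, hQR, hπQ⟩⟩
    rcases eq_or_ne P P0 with rfl | hPne
    · exact hπP
    rcases eq_or_ne Q P0 with rfl | hQne
    · rw [mem_offDiag] at hπP hπQ
      exact absurd ((hR.2 π.1 ((hR.1 P hPR).1 hπP.1)).unique ⟨hPR, hπP.1⟩ ⟨hP0.1, hπQ.1⟩) hPne
    · exfalso
      rw [mem_offDiag] at hπP hπQ
      have hsub : ({π.1, π.2} : Finset (Finset X)) ⊆ P ∩ Q := by
        intro x hx
        rw [mem_insert, mem_singleton] at hx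
        rcases hx with rfl | rfl
        · exact mem_inter.mpr ⟨hπP.1, hπQ.1⟩
        · exact mem_inter.mpr ⟨hπP.2.1, hπQ.2.1⟩
      have h2 : 2 ≤ (P ∩ Q).card := by
        have := Finset.card_le_card hsub
        rwa [card_pair hπP.2.2] at this
      exact absurd (hle P hPR Q hQR hPne hQne) (by omega)
  · intro hπ
    exact ⟨⟨P0, hP0.1, hπ⟩, ⟨P0, hP0.2, hπ⟩⟩

end AuxLemmas2

theorem max_compatible_resolutions (s k m : ℕ) (hs : 2 ≤ s) (hk : 2 ≤ k)
    {X : Type*} [Fintype X] [DecidableEq X] (B : Finset (Finset X))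
    (hD : IsSteinerSystem ((s * k - s + 1) * k) k B)
    (S : Finset (Finset (Finset (Finset X))))
    (hres : ∀ R ∈ S, IsResolution B R)
    (hcompat : ∀ R1 ∈ S, ∀ R2 ∈ S, R1 ≠ R2 → Compatible R1 R2)
    (hm : S.card = m) :
    m ≤ (s * k - k + 1) * s := by
  classical
  obtain ⟨hv, hblk, hpair⟩ := hD
  rcases Nat.eq_zero_or_pos m with rfl | hm0
  · exact Nat.zero_le _
  obtain ⟨M, rfl⟩ : ∃ M, m = M + 1 := ⟨m - 1, by omega⟩
  obtain ⟨s1, rfl⟩ : ∃ t, s = t + 1 := ⟨s - 1, by omega⟩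
  obtain ⟨k1, rfl⟩ : ∃ t, k = t + 1 := ⟨k - 1, by omega⟩
  have hs1 : 1 ≤ s1 := by omega
  have hk1 : 1 ≤ k1 := by omega
  -- abbreviations
  set n : ℕ := (s1+1)*k1 + 1 with hn
  set r : ℕ := (s1+1)*(k1+1) + 1 with hr0
  set a : ℕ := s1*(k1+1) + 1 with ha
  set w : ℕ := (s1+1)*k1 with hw
  set q : ℕ := n * w with hq0
  -- rewrite the cardinality of the point set
  have hveq : Fintype.card X = n * (k1+1) := by
    rw [hv, hn]
    congr 1
    rw [Nat.mul_succ, Nat.add_sub_cancel]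
  -- rewrite the goal
  have hgoal : (s1+1)*(k1+1) - (k1+1) + 1 = a := by
    rw [ha, Nat.succ_mul, Nat.add_sub_cancel]
  rw [hgoal]
  -- every point is on exactly r blocks
  have hdeg : ∀ p : X, (B.filter (fun b => p ∈ b)).card = r := by
    intro p
    have h1 := point_deg B (k1+1) hblk hpair p
    rw [hveq] at h1
    have h2 : n * (k1+1) - 1 = r * k1 := by
      have : n * (k1+1) = r * k1 + 1 := by rw [hn, hr0]; ring
      rw [this, Nat.add_sub_cancel]
    rw [h2] at h1
    simp only [Nat.add_sub_cancel] at h1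
    exact Nat.eq_of_mul_eq_mul_right (by omega) h1
  -- the total number of blocks
  have hB : B.card = n * r := by
    have h1 := block_count B (k1+1) hblk hpair
    rw [hveq] at h1
    have e1 : (k1+1)*(k1+1) - (k1+1) = (k1+1)*k1 := by
      rw [Nat.mul_succ, Nat.add_sub_cancel]
    have e2 : (n*(k1+1))*(n*(k1+1)) - (n*(k1+1)) = (n*r) * ((k1+1)*k1) := by
      have : (n*(k1+1))*(n*(k1+1)) = (n*r)*((k1+1)*k1) + n*(k1+1) := by rw [hn, hr0]; ring
      rw [this, Nat.add_sub_cancel]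
    rw [e1, e2] at h1
    exact Nat.eq_of_mul_eq_mul_right (by positivity) h1
  -- the number of blocks disjoint from a fixed block
  have hDc : ∀ c ∈ B, (B.filter (fun d => d ≠ c ∧ Disjoint c d)).card = w * a := by
    intro c hc
    have hM := meet_count B (k1+1) r hpair hdeg c hc (hblk c hc)
    have hr1 : r - 1 = (s1+1)*(k1+1) := by rw [hr0, Nat.add_sub_cancel]
    rw [hr1] at hM
    have hsplit : B.erase c
        = (B.filter (fun d => d ≠ c ∧ ¬ Disjoint c d)) ∪ (B.filter (fun d => d ≠ c ∧ Disjoint c d)) := by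
      ext d
      simp only [mem_erase, mem_union, mem_filter]
      tauto
    have hdisj2 : Disjoint (B.filter (fun d => d ≠ c ∧ ¬ Disjoint c d))
        (B.filter (fun d => d ≠ c ∧ Disjoint c d)) := by
      rw [Finset.disjoint_left]
      intro d hd1 hd2
      rw [mem_filter] at hd1 hd2
      exact hd1.2.2 hd2.2.2
    have hcard := congrArg Finset.card hsplit
    rw [card_erase_of_mem hc, card_union_of_disjoint hdisj2, hM, hB] at hcard
    have hkey : n * r = (k1+1) * ((s1+1)*(k1+1)) + w * a + 1 := by
      rw [hn, hr0, hw, ha]; ring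
    omega
  -- the set of ordered pairs of disjoint distinct blocks
  set PP : Finset (Finset X × Finset X)
    := B.biUnion (fun c => (B.filter (fun d => d ≠ c ∧ Disjoint c d)).image (fun d => (c, d)))
    with hPP
  have hPPcard : PP.card = (r * q) * a := by
    rw [hPP, card_biUnion ?hdj]
    case hdj =>
      intro c1 h1 c2 h2 hne
      simp only [Function.onFun]
      rw [Finset.disjoint_left]
      rintro π hπ1 hπ2
      rw [mem_image] at hπ1 hπ2
      obtain ⟨d1, _, rfl⟩ := hπ1
      obtain ⟨d2, _, he⟩ := hπ2
      exact hne (congrArg Prod.fst he).symm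
    have hterm : ∀ c ∈ B, ((B.filter (fun d => d ≠ c ∧ Disjoint c d)).image (fun d => (c, d))).card
        = w * a := by
      intro c hc
      rw [Finset.card_image_of_injective _ (fun x y hxy => (Prod.mk.injEq c x c y ▸ hxy).2),
        hDc c hc]
    rw [Finset.sum_congr rfl hterm, Finset.sum_const, smul_eq_mul, hB, hq0]
    ring
  have hmemPP : ∀ x y : Finset X, ((x, y) ∈ PP ↔ (x ∈ B ∧ y ∈ B ∧ y ≠ x ∧ Disjoint x y)) := by
    intro x y
    simp only [hPP, mem_biUnion, mem_image, mem_filter, Prod.mk.injEq]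
    constructor
    · rintro ⟨c, hc, d, ⟨hdB, hdc, hdis⟩, rfl, rfl⟩
      exact ⟨hc, hdB, hdc, hdis⟩
    · rintro ⟨hx, hy, hne, hdis⟩
      exact ⟨x, hx, y, ⟨hy, hne, hdis⟩, rfl, rfl⟩
  -- a point
  have hpos : 0 < Fintype.card X := by rw [hveq]; positivity
  obtain ⟨p0⟩ := Fintype.card_pos_iff.mp hpos
  -- class cardinalities
  have hclassn : ∀ R ∈ S, ∀ P ∈ R, P.card = n :=
    fun R hR P hP => class_card hblk hveq (by omega) ((hres R hR).1 P hP)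
  have hnn : n * n - n = w + w * w := by
    have : n * n = (w + w * w) + n := by rw [hn, hw]; ring
    rw [this, Nat.add_sub_cancel]
  have hqval : q = w + w * w := by rw [hq0, hn]; ring
  have hoffq : ∀ R ∈ S, ∀ P ∈ R, P.offDiag.card = q := by
    intro R hR P hP
    rw [offDiag_card, hclassn R hR P hP, hnn, hqval]
  -- covPairs facts
  have hCovsub : ∀ R ∈ S, covPairs R ⊆ PP := by
    intro R hR π hπ
    rw [covPairs, mem_biUnion] at hπ
    obtain ⟨P, hP, hπP⟩ := hπ
    rw [mem_offDiag] at hπP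
    obtain ⟨h1, h2, h3⟩ := hπP
    have hcl := (hres R hR).1 P hP
    have : (π.1, π.2) ∈ PP := (hmemPP π.1 π.2).mpr
      ⟨hcl.1 h1, hcl.1 h2, Ne.symm h3, hcl.2.1 π.1 h1 π.2 h2 h3⟩
    exact this
  have hCovcard : ∀ R ∈ S, (covPairs R).card = r * q := by
    intro R hR
    rw [cov_card (hres R hR) (hclassn R hR), res_card hdeg (hres R hR) p0, hnn, hqval]
  have hCovInter : ∀ R ∈ S, ∀ R' ∈ S, R ≠ R' → (covPairs R ∩ covPairs R').card = q := by
    intro R hR R' hR' hne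
    obtain ⟨P0, hI, hle⟩ := hcompat R hR R' hR' hne
    rw [cov_inter (hres R hR) hI hle]
    have hP0 : P0 ∈ R ∩ R' := by rw [hI]; exact mem_singleton_self P0
    exact hoffq R hR P0 (mem_inter.mp hP0).1
  -- the two sums
  set F : Finset X × Finset X → ℕ := fun π => (S.filter (fun R => π ∈ covPairs R)).card with hF
  have hS1 : ∑ π ∈ PP, F π = (M+1) * (r * q) := by
    have h1 : ∀ π ∈ PP, F π = ∑ R ∈ S, if π ∈ covPairs R then 1 else 0 := by
      intro π _
      rw [hF]; exact card_filter _ _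
    rw [Finset.sum_congr rfl h1, Finset.sum_comm]
    have h2 : ∀ R ∈ S, (∑ π ∈ PP, if π ∈ covPairs R then 1 else 0) = r * q := by
      intro R hR
      rw [← card_filter, filter_mem_eq_inter, inter_eq_right.mpr (hCovsub R hR), hCovcard R hR]
    rw [Finset.sum_congr rfl h2, Finset.sum_const, smul_eq_mul, hm]
  have hS2 : ∑ π ∈ PP, F π * F π = (M+1) * (r * q) + (M+1) * (M * q) := by
    have h1 : ∀ π ∈ PP, F π * F π
        = ∑ R ∈ S, ∑ R' ∈ S, if π ∈ covPairs R ∩ covPairs R' then 1 else 0 := by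
      intro π _
      rw [hF]
      simp only [card_filter]
      rw [Finset.sum_mul_sum]
      refine Finset.sum_congr rfl fun R _ => Finset.sum_congr rfl fun R' _ => ?_
      by_cases h1 : π ∈ covPairs R <;> by_cases h2 : π ∈ covPairs R' <;>
        simp [mem_inter, h1, h2]
    rw [Finset.sum_congr rfl h1, Finset.sum_comm]
    have h2 : ∀ R ∈ S, (∑ π ∈ PP, ∑ R' ∈ S, if π ∈ covPairs R ∩ covPairs R' then 1 else 0)
        = r * q + M * q := by
      intro R hR
      rw [Finset.sum_comm]
      have h3 : ∀ R' ∈ S, (∑ π ∈ PP, if π ∈ covPairs R ∩ covPairs R' then 1 else 0)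
          = (covPairs R ∩ covPairs R').card := by
        intro R' _
        rw [← card_filter, filter_mem_eq_inter,
          inter_eq_right.mpr (Finset.Subset.trans Finset.inter_subset_left (hCovsub R hR))]
      rw [Finset.sum_congr rfl h3, ← Finset.add_sum_erase S _ hR, inter_self, hCovcard R hR]
      have h4 : ∀ R' ∈ S.erase R, (covPairs R ∩ covPairs R').card = q := by
        intro R' hR'
        exact hCovInter R hR R' (mem_of_mem_erase hR') (fun h => (mem_erase.mp hR').1 h.symm)
      rw [Finset.sum_congr rfl h4, Finset.sum_const, smul_eq_mul, card_erase_of_mem hR, hm]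
      simp only [Nat.add_sub_cancel]
    rw [Finset.sum_congr rfl h2, Finset.sum_const, smul_eq_mul, hm]
    ring
  -- Cauchy–Schwarz
  have hcs := Finset.sum_mul_sq_le_sq_mul_sq PP F (fun _ => 1)
  simp only [mul_one, one_pow, Finset.sum_const, smul_eq_mul, pow_two] at hcs
  rw [hS1, hS2, hPPcard] at hcs
  -- hcs : (M+1)*(r*q) * ((M+1)*(r*q)) ≤ ((M+1)*(r*q) + (M+1)*(M*q)) * ((r*q)*a)
  have hqpos : 0 < q := by rw [hq0, hn, hw]; positivity
  have hrpos : 0 < r := by rw [hr0]; positivity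
  have hstep : (M+1) * r ≤ ((s1+1)*(k1+1) + (M+1)) * a := by
    refine Nat.le_of_mul_le_mul_right ?_ (show 0 < (M+1)*q*q*r by positivity)
    calc ((M+1)*r) * ((M+1)*q*q*r) = ((M+1)*(r*q)) * ((M+1)*(r*q)) := by ring
      _ ≤ ((M+1)*(r*q) + (M+1)*(M*q)) * ((r*q)*a) := hcs
      _ = (((s1+1)*(k1+1) + (M+1)) * a) * ((M+1)*q*q*r) := by rw [hr0]; ring
  have e3 : ((s1+1)*(k1+1) + (M+1)) * a + (M+1)*(k1+1) = (M+1)*r + ((s1+1)*(k1+1))*a := by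
    rw [ha, hr0]; ring
  have e4 : ((s1+1)*(k1+1))*a = (a*(s1+1))*(k1+1) := by ring
  have hfin : (M+1)*(k1+1) ≤ (a*(s1+1))*(k1+1) := by linarith
  exact Nat.le_of_mul_le_mul_right hfin (by positivity)
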